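/- arXiv:1710.07167 — 2 statements merged into one kernel-verified Lean document; each statement's English description precedes it below -/
import Mathlib

section
/- There is no deterministic sequence (h_k) of real numbers such that, for an i.i.d. sequence (X_i) of real random variables with finite positive variance, the event { liminf_{k→∞} (h_k + Σ_{i=1}^k X_i) ∈ (−∞, ∞) and the liminf is finite and the corresponding exponentiated quantity lies in (0,∞) } has probability one. More precisely: if (X_i) are i.i.d. with Var(X_1) > 0 and E|X_1| < ∞, then for every real sequence (h_k), the probability that liminf_{k→∞} (h_k + Σ_{i=1}^k X_i) is a finite real number is strictly less than 1 (in fact the liminf is −∞ or the sequence is unbounded above on a set of positive probability). -/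
open MeasureTheory ProbabilityTheory Filter Complex Real
open scoped ENNReal NNReal Topology

section Aux

/-- Adding a real constant on the right is an order isomorphism of `EReal`. -/
noncomputable def erealShift (c : ℝ) : EReal ≃o EReal where
  toFun x := x + (c : EReal)
  invFun x := x - (c : EReal)
  left_inv x := EReal.add_sub_cancel_right
  right_inv x := EReal.sub_add_cancel
  map_rel_iff' := by
    intro a b
    exact (EReal.addLECancellable_coe c).add_le_add_iff_right

lemma ereal_liminf_add_const (u : ℕ → EReal) (c : ℝ) :
    Filter.liminf (fun n => u n + (c : EReal)) Filter.atTop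
      = Filter.liminf u Filter.atTop + (c : EReal) := by
  have := (erealShift c).liminf_apply (f := Filter.atTop) (u := u)
  simpa [erealShift] using this.symm

lemma norm_exp_real_mul_I (t x : ℝ) : ‖Complex.exp ((t : ℂ) * (x : ℂ) * I)‖ = 1 := by
  have : (t : ℂ) * (x : ℂ) * I = ((t * x : ℝ) : ℂ) * I := by push_cast; ring
  rw [this, Complex.norm_exp_ofReal_mul_I]

lemma indepFun_integral_comp_mul {Ω : Type*} [MeasurableSpace Ω]
    {μ : Measure Ω} [IsProbabilityMeasure μ] {A B : Ω → ℝ}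
    (hA : Measurable A) (hB : Measurable B) (hAB : IndepFun A B μ)
    {φ ψ : ℝ → ℂ} (hφ : Measurable φ) (hψ : Measurable ψ) :
    ∫ ω, φ (A ω) * ψ (B ω) ∂μ = (∫ ω, φ (A ω) ∂μ) * ∫ ω, ψ (B ω) ∂μ := by
  have hmap : μ.map (fun ω => (A ω, B ω)) = (μ.map A).prod (μ.map B) :=
    (indepFun_iff_map_prod_eq_prod_map_map hA.aemeasurable hB.aemeasurable).mp hAB
  have hsm : AEStronglyMeasurable (fun p : ℝ × ℝ => φ p.1 * ψ p.2)
      (μ.map (fun ω => (A ω, B ω))) :=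
    ((hφ.comp measurable_fst).mul (hψ.comp measurable_snd)).aestronglyMeasurable
  calc ∫ ω, φ (A ω) * ψ (B ω) ∂μ
      = ∫ p : ℝ × ℝ, φ p.1 * ψ p.2 ∂(μ.map (fun ω => (A ω, B ω))) :=
        (integral_map (hA.prodMk hB).aemeasurable hsm).symm
    _ = ∫ p : ℝ × ℝ, φ p.1 * ψ p.2 ∂((μ.map A).prod (μ.map B)) := by rw [hmap]
    _ = (∫ x, φ x ∂(μ.map A)) * ∫ y, ψ y ∂(μ.map B) := integral_prod_mul φ ψ
    _ = (∫ ω, φ (A ω) ∂μ) * ∫ ω, ψ (B ω) ∂μ := by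
        rw [integral_map hA.aemeasurable hφ.aestronglyMeasurable,
          integral_map hB.aemeasurable hψ.aestronglyMeasurable]

end Aux

lemma ae_eq_const_of_norm_integral_eq_one {Ω : Type*} [MeasurableSpace Ω]
    (μ : Measure Ω) [IsProbabilityMeasure μ] {f : Ω → ℂ}
    (hf : AEStronglyMeasurable f μ) (hnorm : ∀ ω, ‖f ω‖ = 1)
    (habs : ‖∫ ω, f ω ∂μ‖ = 1) :
    f =ᵐ[μ] fun _ => ∫ ω, f ω ∂μ := by
  set c : ℂ := ∫ ω, f ω ∂μ with hc
  have hfi : Integrable f μ := by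
    refine Integrable.mono' (integrable_const 1) hf ?_
    filter_upwards with ω
    rw [hnorm ω]
  have hci : Integrable (fun ω => (starRingEnd ℂ) c * f ω) μ := hfi.const_mul _
  have hcc : (starRingEnd ℂ) c * c = ((1 : ℝ) : ℂ) := by
    rw [mul_comm, Complex.mul_conj]
    norm_cast
    rw [Complex.normSq_eq_norm_sq, habs]; norm_num
  have hre : ∫ ω, ((starRingEnd ℂ) c * f ω).re ∂μ = 1 := by
    have := _root_.integral_re (𝕜 := ℂ) hci
    simp only [RCLike.re_to_complex] at this
    rw [this, integral_const_mul, ← hc, hcc]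
    simp
  have hle : ∀ ω, ((starRingEnd ℂ) c * f ω).re ≤ 1 := by
    intro ω
    calc ((starRingEnd ℂ) c * f ω).re ≤ ‖(starRingEnd ℂ) c * f ω‖ :=
          Complex.re_le_norm _
    _ = ‖(starRingEnd ℂ) c * f ω‖ := rfl
    _ = ‖c‖ * ‖f ω‖ := by rw [norm_mul, RCLike.norm_conj]
    _ = 1 := by rw [hnorm ω, habs, one_mul]
  have hrei : Integrable (fun ω => ((starRingEnd ℂ) c * f ω).re) μ := by
    have := hci.re
    simpa only [RCLike.re_to_complex] using this
  have hg : (fun ω => 1 - ((starRingEnd ℂ) c * f ω).re) =ᵐ[μ] 0 := by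
    rw [← integral_eq_zero_iff_of_nonneg]
    · rw [integral_sub (integrable_const 1) hrei, hre]
      simp
    · intro ω; simp only [Pi.zero_apply, sub_nonneg]; exact hle ω
    · exact (integrable_const 1).sub hrei
  filter_upwards [hg] with ω hω
  simp only [Pi.zero_apply] at hω
  have h1 : ((starRingEnd ℂ) c * f ω).re = 1 := by linarith
  have hnormz : ‖(starRingEnd ℂ) c * f ω‖ = 1 := by
    rw [norm_mul, RCLike.norm_conj, hnorm ω, habs, one_mul]
  have him : ((starRingEnd ℂ) c * f ω).im = 0 := by
    have h2 := Complex.sq_norm ((starRingEnd ℂ) c * f ω)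
    rw [Complex.normSq_apply, hnormz] at h2
    nlinarith [h1, h2]
  have hz : (starRingEnd ℂ) c * f ω = 1 := by
    apply Complex.ext <;> simp [h1, him]
  have hcne : (starRingEnd ℂ) c ≠ 0 := by
    simp only [ne_eq, map_eq_zero]
    intro h0
    rw [h0] at habs; simp at habs
  refine mul_left_cancel₀ hcne ?_
  rw [hz, hcc]; norm_num

lemma exp_eq_exp_real (t a b : ℝ)
    (h : Complex.exp ((t:ℂ) * (a:ℂ) * I) = Complex.exp ((t:ℂ) * (b:ℂ) * I)) :
    ∃ n : ℤ, t * a = t * b + n * (2 * π) := by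
  obtain ⟨n, hn⟩ := Complex.exp_eq_exp_iff_exists_int.mp h
  refine ⟨n, ?_⟩
  have h' : ((t * a - t * b - n * (2 * π) : ℝ) : ℂ) * I = 0 := by
    push_cast
    linear_combination hn
  have h'' : ((t * a - t * b - n * (2 * π) : ℝ) : ℂ) = 0 := by
    rcases mul_eq_zero.mp h' with h0 | h0
    · exact h0
    · exact absurd h0 I_ne_zero
  have := Complex.ofReal_eq_zero.mp h''
  linarith

lemma exists_small_char_lt_one {Ω : Type*} [MeasurableSpace Ω]
    (μ : Measure Ω) [IsProbabilityMeasure μ] {X : Ω → ℝ} (hX : Measurable X)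
    (hvar : 0 < variance X μ) :
    ∀ ε : ℝ, 0 < ε → ∃ t : ℝ, 0 < t ∧ t < ε ∧
      ‖∫ ω, Complex.exp ((t : ℂ) * (X ω : ℂ) * I) ∂μ‖ < 1 := by
  intro ε hε
  by_contra hcon
  push_neg at hcon
  -- so for all t ∈ (0, ε), the norm equals 1
  have hone : ∀ t : ℝ, 0 < t → t < ε → ‖∫ ω, Complex.exp ((t:ℂ) * (X ω :ℂ) * I) ∂μ‖ = 1 := by
    intro t ht htε
    refine le_antisymm ?_ (hcon t ht htε)
    calc ‖∫ ω, Complex.exp ((t:ℂ) * (X ω :ℂ) * I) ∂μ‖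
        ≤ 1 * (μ Set.univ).toReal := by
          refine norm_integral_le_of_norm_le_const ?_
          filter_upwards with ω
          rw [norm_exp_real_mul_I]
      _ = 1 := by simp
  -- measurability of the integrand
  have hmeas_exp : ∀ t : ℝ, AEStronglyMeasurable (fun ω => Complex.exp ((t:ℂ)*(X ω :ℂ)*I)) μ := by
    intro t
    exact (Complex.measurable_exp.comp
      (((measurable_const.mul (Complex.measurable_ofReal.comp hX))).mul measurable_const)).aestronglyMeasurable
  -- two specific parameters with irrational ratio
  set t₁ : ℝ := ε / 2 with ht₁
  set t₂ : ℝ := ε / 2 / Real.sqrt 2 with ht₂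
  have hsqrt2 : (1:ℝ) < Real.sqrt 2 := by
    rw [show (1:ℝ) = Real.sqrt 1 by simp]
    exact Real.sqrt_lt_sqrt (by norm_num) (by norm_num)
  have hsq_pos : (0:ℝ) < Real.sqrt 2 := by linarith
  have ht₁pos : 0 < t₁ := by positivity
  have ht₁lt : t₁ < ε := by linarith
  have ht₂pos : 0 < t₂ := by positivity
  have ht₂lt : t₂ < ε := by
    rw [ht₂]
    calc ε / 2 / Real.sqrt 2 < ε / 2 / 1 := by
          apply div_lt_div_of_pos_left (by linarith) (by norm_num) hsqrt2
      _ = ε / 2 := by ring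
      _ < ε := by linarith
  have hconst : ∀ t : ℝ, 0 < t → t < ε →
      ∀ᵐ ω ∂μ, Complex.exp ((t:ℂ)*(X ω:ℂ)*I) = ∫ ω', Complex.exp ((t:ℂ)*(X ω':ℂ)*I) ∂μ := by
    intro t ht htε
    exact ae_eq_const_of_norm_integral_eq_one μ (hmeas_exp t)
      (fun ω => norm_exp_real_mul_I t (X ω)) (hone t ht htε)
  have h1 := hconst t₁ ht₁pos ht₁lt
  have h2 := hconst t₂ ht₂pos ht₂lt
  haveI : (ae μ).NeBot := ae_neBot.mpr (IsProbabilityMeasure.ne_zero μ)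
  obtain ⟨ω₀, hω₀1, hω₀2⟩ := (h1.and h2).exists
  have hXconst : ∀ᵐ ω ∂μ, X ω = X ω₀ := by
    filter_upwards [h1, h2] with ω ha hb
    have e1 : Complex.exp ((t₁:ℂ)*(X ω:ℂ)*I) = Complex.exp ((t₁:ℂ)*(X ω₀:ℂ)*I) := by
      rw [ha, hω₀1]
    have e2 : Complex.exp ((t₂:ℂ)*(X ω:ℂ)*I) = Complex.exp ((t₂:ℂ)*(X ω₀:ℂ)*I) := by
      rw [hb, hω₀2]
    obtain ⟨n₁, hn₁⟩ := exp_eq_exp_real t₁ (X ω) (X ω₀) e1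
    obtain ⟨n₂, hn₂⟩ := exp_eq_exp_real t₂ (X ω) (X ω₀) e2
    by_contra hd
    have hdne : X ω - X ω₀ ≠ 0 := sub_ne_zero.mpr hd
    have e1' : t₁ * (X ω - X ω₀) = (n₁:ℝ) * (2*π) := by ring_nf; ring_nf at hn₁; linarith
    have e2' : t₂ * (X ω - X ω₀) = (n₂:ℝ) * (2*π) := by ring_nf; ring_nf at hn₂; linarith
    have h2pi : (2*π) ≠ 0 := by positivity
    have hn₂0 : (n₂:ℝ) ≠ 0 := by
      intro h0
      rw [h0, zero_mul] at e2'
      rcases mul_eq_zero.mp e2' with h | h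
      · linarith
      · exact hdne h
    have ht : t₁ = Real.sqrt 2 * t₂ := by
      rw [ht₁, ht₂]
      field_simp
    have h3 : (Real.sqrt 2 * (n₂:ℝ)) * (2*π) = (n₁:ℝ)*(2*π) := by
      have : Real.sqrt 2 * (t₂ * (X ω - X ω₀)) = t₁ * (X ω - X ω₀) := by rw [ht]; ring
      rw [e1', e2'] at this
      linarith [this]
    have key : Real.sqrt 2 * (n₂:ℝ) = (n₁:ℝ) := mul_right_cancel₀ h2pi h3
    have hrat : ((n₁ / n₂ : ℚ) : ℝ) = Real.sqrt 2 := by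
      push_cast
      rw [div_eq_iff hn₂0]
      linarith [key]
    exact irrational_sqrt_two ⟨(n₁ / n₂ : ℚ), hrat⟩
  have hmean : μ[X] = X ω₀ := by
    rw [integral_congr_ae hXconst]
    simp
  have hev : evariance X μ = 0 := by
    unfold ProbabilityTheory.evariance
    have h0 : (fun ω => (‖X ω - μ[X]‖ₑ ^ 2)) =ᵐ[μ] 0 := by
      filter_upwards [hXconst] with ω hω
      simp [hω, hmean]
    rw [lintegral_congr_ae h0]
    simp
  have : variance X μ = 0 := by
    unfold ProbabilityTheory.variance
    rw [hev]
    simp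
  linarith



/-- for i.i.d. real random variables with finite mean and positive variance and
any deterministic sequence `(h_k)`, the probability that
`liminf_{k→∞} (h_k + Σ_{i=1}^k X_i)` is a finite real number is strictly less than one. -/
theorem no_deterministic_centering_sequence
    {Ω : Type*} [MeasurableSpace Ω] (μ : Measure Ω) [IsProbabilityMeasure μ]
    (X : ℕ → Ω → ℝ) (hmeas : ∀ i, Measurable (X i))
    (hindep : iIndepFun X μ)
    (hident : ∀ i, IdentDistrib (X i) (X 0) μ μ)
    (hint : Integrable (X 0) μ) (hvar : 0 < variance (X 0) μ)
    (h : ℕ → ℝ) :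
    μ {ω | ∃ L : ℝ,
        Filter.liminf (fun k : ℕ =>
          ((h k + ∑ i ∈ Finset.range k, X i ω : ℝ) : EReal)) Filter.atTop = (L : EReal)} < 1 := by
  classical
  by_contra hcon
  push_neg at hcon
  set S : ℕ → Ω → ℝ := fun k ω => ∑ i ∈ Finset.range k, X i ω with hSdef
  set R : ℕ → ℕ → Ω → ℝ := fun k m ω => ∑ i ∈ Finset.Ico k m, X i ω with hRdef
  set Lf : ℕ → Ω → EReal :=
    fun k ω => Filter.liminf (fun m => ((h m + R k m ω : ℝ) : EReal)) Filter.atTop with hLfdef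
  have measS : ∀ k, Measurable (S k) := fun k => Finset.measurable_sum _ (fun i _ => hmeas i)
  have measR : ∀ k m, Measurable (fun ω => R k m ω) :=
    fun k m => Finset.measurable_sum _ (fun i _ => hmeas i)
  have measLf : ∀ k, Measurable (Lf k) := by
    intro k
    apply Measurable.liminf
    intro m
    exact (measurable_const.add (measR k m)).coe_real_ereal
  have hR0 : ∀ ω m, R 0 m ω = S m ω := by
    intro ω m
    show (∑ i ∈ Finset.Ico 0 m, X i ω) = ∑ i ∈ Finset.range m, X i ω
    rw [Finset.range_eq_Ico]
  -- the event in the statement is the finiteness event for `Lf 0`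
  have hEeq : {ω | ∃ L : ℝ,
        Filter.liminf (fun k : ℕ =>
          ((h k + ∑ i ∈ Finset.range k, X i ω : ℝ) : EReal)) Filter.atTop = (L : EReal)}
      = {ω | Lf 0 ω ≠ ⊥ ∧ Lf 0 ω ≠ ⊤} := by
    ext ω
    have hfun : (fun k : ℕ => ((h k + ∑ i ∈ Finset.range k, X i ω : ℝ) : EReal))
        = fun m => ((h m + R 0 m ω : ℝ) : EReal) := by
      funext m
      rw [hR0 ω m]
    have hkey : Filter.liminf (fun k : ℕ =>
        ((h k + ∑ i ∈ Finset.range k, X i ω : ℝ) : EReal)) Filter.atTop = Lf 0 ω := by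
      rw [hfun]
    simp only [Set.mem_setOf_eq, hkey]
    constructor
    · rintro ⟨L, hL⟩
      rw [hL]
      exact ⟨EReal.coe_ne_bot L, EReal.coe_ne_top L⟩
    · rintro ⟨hb, ht⟩
      exact ⟨(Lf 0 ω).toReal, (EReal.coe_toReal ht hb).symm⟩
  have hEmeas : MeasurableSet {ω | Lf 0 ω ≠ ⊥ ∧ Lf 0 ω ≠ ⊤} := by
    have h1 : MeasurableSet {ω | Lf 0 ω ≠ ⊥} :=
      ((measLf 0) (measurableSet_singleton ⊥)).compl
    have h2 : MeasurableSet {ω | Lf 0 ω ≠ ⊤} :=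
      ((measLf 0) (measurableSet_singleton ⊤)).compl
    exact h1.inter h2
  have hE1 : μ {ω | Lf 0 ω ≠ ⊥ ∧ Lf 0 ω ≠ ⊤} = 1 := by
    rw [hEeq] at hcon
    exact le_antisymm prob_le_one hcon
  have hae : ∀ᵐ ω ∂μ, Lf 0 ω ≠ ⊥ ∧ Lf 0 ω ≠ ⊤ := by
    rw [ae_iff]
    have : {ω | ¬(Lf 0 ω ≠ ⊥ ∧ Lf 0 ω ≠ ⊤)} = {ω | Lf 0 ω ≠ ⊥ ∧ Lf 0 ω ≠ ⊤}ᶜ := by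
      ext ω; simp
    rw [this, measure_compl hEmeas (measure_ne_top μ _), hE1, measure_univ]
    simp
  -- decomposition of the liminf
  have hdec : ∀ k ω, Lf 0 ω = Lf k ω + (S k ω : EReal) := by
    intro k ω
    have he : ∀ᶠ m in atTop, ((h m + R 0 m ω : ℝ) : EReal)
        = ((h m + R k m ω : ℝ) : EReal) + (S k ω : EReal) := by
      filter_upwards [eventually_ge_atTop k] with m hm
      rw [← EReal.coe_add]
      norm_cast
      have hsum : S k ω + R k m ω = R 0 m ω := by
        rw [hSdef, hRdef]
        simp only [Finset.range_eq_Ico]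
        exact Finset.sum_Ico_consecutive _ (Nat.zero_le k) hm
      linarith
    calc Lf 0 ω = Filter.liminf (fun m => ((h m + R k m ω : ℝ) : EReal) + (S k ω : EReal))
          Filter.atTop := liminf_congr he
      _ = Lf k ω + (S k ω : EReal) := ereal_liminf_add_const _ _
  set U : ℕ → Ω → ℝ := fun k ω => (Lf k ω).toReal with hUdef
  have measU : ∀ k, Measurable (U k) := fun k => (measLf k).ereal_toReal
  have haeT : ∀ᵐ ω ∂μ, ∀ k, U 0 ω = S k ω + U k ω := by
    filter_upwards [hae] with ω hω
    intro k
    have hkb : Lf k ω ≠ ⊥ := by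
      intro hb
      apply hω.1
      rw [hdec k ω, hb]
      simp
    have hkt : Lf k ω ≠ ⊤ := by
      intro ht
      apply hω.2
      rw [hdec k ω, ht]
      simp
    rw [hUdef]
    simp only []
    rw [hdec k ω, EReal.toReal_add hkt hkb (EReal.coe_ne_top _) (EReal.coe_ne_bot _),
      EReal.toReal_coe]
    ring
  -- independence setup
  set m' : ℕ → MeasurableSpace Ω := fun i => MeasurableSpace.comap (X i) inferInstance with hm'def
  have hle : ∀ i, m' i ≤ _ := fun i => (hmeas i).comap_le
  have hiI : iIndep m' μ := hindep
  have hXm' : ∀ i, Measurable[m' i] (X i) := fun i => Measurable.of_comap_le le_rfl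
  have hSmeas' : ∀ k, Measurable[⨆ i ∈ {i : ℕ | i < k}, m' i] (S k) := by
    intro k
    apply Finset.measurable_sum
    intro i hi
    exact (hXm' i).mono (le_biSup m' (Finset.mem_range.mp hi)) le_rfl
  have hUmeas' : ∀ k, Measurable[⨆ i ∈ {i : ℕ | i < k}ᶜ, m' i] (U k) := by
    intro k
    apply Measurable.ereal_toReal
    apply Measurable.liminf
    intro m
    apply Measurable.coe_real_ereal
    apply Measurable.const_add
    apply Finset.measurable_sum
    intro i hi
    have hki : i ∈ {i : ℕ | i < k}ᶜ := by
      simp only [Set.mem_compl_iff, Set.mem_setOf_eq, not_lt]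
      exact (Finset.mem_Ico.mp hi).1
    exact (hXm' i).mono (le_biSup m' hki) le_rfl
  have hXmeas' : ∀ k, Measurable[⨆ i ∈ {i : ℕ | i < k}ᶜ, m' i] (X k) := by
    intro k
    have hki : k ∈ {i : ℕ | i < k}ᶜ := by simp
    exact (hXm' k).mono (le_biSup m' hki) le_rfl
  have hsupIndep : ∀ k, Indep (⨆ i ∈ {i : ℕ | i < k}, m' i) (⨆ i ∈ {i : ℕ | i < k}ᶜ, m' i) μ :=
    fun k => indep_biSup_compl hle hiI _
  have hIndepSU : ∀ k, IndepFun (S k) (U k) μ := by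
    intro k
    rw [IndepFun_iff_Indep]
    exact indep_of_indep_of_le_right
      (indep_of_indep_of_le_left (hsupIndep k) (hSmeas' k).comap_le) (hUmeas' k).comap_le
  have hIndepSX : ∀ k, IndepFun (S k) (X k) μ := by
    intro k
    rw [IndepFun_iff_Indep]
    exact indep_of_indep_of_le_right
      (indep_of_indep_of_le_left (hsupIndep k) (hSmeas' k).comap_le) (hXmeas' k).comap_le
  -- characteristic function computations
  have hφmeas : ∀ t : ℝ, Measurable (fun x : ℝ => Complex.exp ((t : ℂ) * (x : ℂ) * I)) := by
    intro t
    exact Complex.measurable_exp.comp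
      ((measurable_const.mul Complex.measurable_ofReal).mul measurable_const)
  have hcharS : ∀ (k : ℕ) (t : ℝ), ∫ ω, Complex.exp ((t : ℂ) * (S k ω : ℂ) * I) ∂μ
      = (∫ ω, Complex.exp ((t : ℂ) * (X 0 ω : ℂ) * I) ∂μ) ^ k := by
    intro k t
    induction k with
    | zero =>
      simp [hSdef]
    | succ n ih =>
      have hsum : ∀ ω, S (n + 1) ω = S n ω + X n ω := by
        intro ω
        rw [hSdef]
        exact Finset.sum_range_succ _ _
      have hfeq : (fun ω => Complex.exp ((t : ℂ) * (S (n+1) ω : ℂ) * I))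
          = fun ω => Complex.exp ((t : ℂ) * (S n ω : ℂ) * I)
              * Complex.exp ((t : ℂ) * (X n ω : ℂ) * I) := by
        funext ω
        rw [hsum ω, ← Complex.exp_add]
        push_cast
        ring_nf
      rw [hfeq, indepFun_integral_comp_mul (measS n) (hmeas n) (hIndepSX n) (hφmeas t) (hφmeas t),
        ih, pow_succ]
      congr 1
      exact ((hident n).comp (hφmeas t)).integral_eq
  have hcharT : ∀ (k : ℕ) (t : ℝ), ∫ ω, Complex.exp ((t : ℂ) * (U 0 ω : ℂ) * I) ∂μ
      = (∫ ω, Complex.exp ((t : ℂ) * (X 0 ω : ℂ) * I) ∂μ) ^ k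
        * ∫ ω, Complex.exp ((t : ℂ) * (U k ω : ℂ) * I) ∂μ := by
    intro k t
    have h1 : (fun ω => Complex.exp ((t : ℂ) * (U 0 ω : ℂ) * I))
        =ᵐ[μ] fun ω => Complex.exp ((t : ℂ) * (S k ω : ℂ) * I)
          * Complex.exp ((t : ℂ) * (U k ω : ℂ) * I) := by
      filter_upwards [haeT] with ω hω
      rw [hω k, ← Complex.exp_add]
      push_cast
      ring_nf
    rw [integral_congr_ae h1,
      indepFun_integral_comp_mul (measS k) (measU k) (hIndepSU k) (hφmeas t) (hφmeas t),
      hcharS k t]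
  have hnormU : ∀ (k : ℕ) (t : ℝ), ‖∫ ω, Complex.exp ((t : ℂ) * (U k ω : ℂ) * I) ∂μ‖ ≤ 1 := by
    intro k t
    calc ‖∫ ω, Complex.exp ((t : ℂ) * (U k ω : ℂ) * I) ∂μ‖
        ≤ 1 * (μ Set.univ).toReal := by
          refine norm_integral_le_of_norm_le_const ?_
          filter_upwards with ω
          rw [norm_exp_real_mul_I]
      _ = 1 := by simp
  have hT0 : ∀ t : ℝ, ‖∫ ω, Complex.exp ((t : ℂ) * (X 0 ω : ℂ) * I) ∂μ‖ < 1 →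
      ∫ ω, Complex.exp ((t : ℂ) * (U 0 ω : ℂ) * I) ∂μ = 0 := by
    intro t ht
    have hk : ∀ k : ℕ, ‖∫ ω, Complex.exp ((t : ℂ) * (U 0 ω : ℂ) * I) ∂μ‖
        ≤ ‖∫ ω, Complex.exp ((t : ℂ) * (X 0 ω : ℂ) * I) ∂μ‖ ^ k := by
      intro k
      rw [hcharT k t, norm_mul, norm_pow]
      calc ‖∫ ω, Complex.exp ((t:ℂ)*(X 0 ω:ℂ)*I) ∂μ‖ ^ k
            * ‖∫ ω, Complex.exp ((t:ℂ)*(U k ω:ℂ)*I) ∂μ‖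
          ≤ ‖∫ ω, Complex.exp ((t:ℂ)*(X 0 ω:ℂ)*I) ∂μ‖ ^ k * 1 :=
            mul_le_mul_of_nonneg_left (hnormU k t) (pow_nonneg (norm_nonneg _) k)
        _ = _ := mul_one _
    have hlim : Tendsto (fun k : ℕ => ‖∫ ω, Complex.exp ((t:ℂ)*(X 0 ω:ℂ)*I) ∂μ‖ ^ k)
        atTop (𝓝 0) := tendsto_pow_atTop_nhds_zero_of_lt_one (norm_nonneg _) ht
    have : ‖∫ ω, Complex.exp ((t:ℂ)*(U 0 ω:ℂ)*I) ∂μ‖ ≤ 0 :=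
      ge_of_tendsto hlim (Eventually.of_forall hk)
    exact norm_le_zero_iff.mp this
  -- small parameters with |char| < 1
  have hX0 := exists_small_char_lt_one μ (hmeas 0) hvar
  choose u hu0 hu1 hu2 using fun n : ℕ => hX0 (1 / (n + 1)) (by positivity)
  have hulim : Tendsto u atTop (𝓝 0) := by
    apply tendsto_of_tendsto_of_tendsto_of_le_of_le tendsto_const_nhds
      tendsto_one_div_add_atTop_nhds_zero_nat
    · intro n; exact (hu0 n).le
    · intro n; exact (hu1 n).le
  have hT0n : ∀ n, ∫ ω, Complex.exp ((u n : ℂ) * (U 0 ω : ℂ) * I) ∂μ = 0 :=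
    fun n => hT0 (u n) (hu2 n)
  -- dominated convergence: the integrals tend to 1
  have htend : Tendsto (fun n => ∫ ω, Complex.exp ((u n : ℂ) * (U 0 ω : ℂ) * I) ∂μ)
      atTop (𝓝 (∫ _ω, (1 : ℂ) ∂μ)) := by
    apply tendsto_integral_of_dominated_convergence (fun _ => (1 : ℝ))
    · intro n
      exact ((hφmeas (u n)).comp (measU 0)).aestronglyMeasurable
    · exact integrable_const 1
    · intro n
      filter_upwards with ω
      rw [norm_exp_real_mul_I]
    · filter_upwards with ω
      have h1 : Tendsto (fun n => (u n : ℂ) * (U 0 ω : ℂ) * I) atTop (𝓝 0) := by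
      
        have h2 := ((Complex.continuous_ofReal.tendsto 0).comp hulim).mul_const
          ((U 0 ω : ℂ) * I)
        simpa [mul_assoc] using h2
      have h3 := (Complex.continuous_exp.tendsto 0).comp h1
      simpa [Function.comp_def] using h3
  rw [integral_const, probReal_univ] at htend
  simp only [hT0n] at htend
  have : (0 : ℂ) = 1 := by
    have := tendsto_nhds_unique htend tendsto_const_nhds
    simpa using this.symm
  exact one_ne_zero this.symm
end

section
/- Zero-infinity dichotomy transfer for packing measure: let F_τ be a random code-tree attractor for a family of uniformly bi-Lipschitz contractions (ratios in [c_min, c_max] ⊂ (0,1)), and let h be a doubling gauge function. Then 𝒫₀^h(F_τ) = ∞ implies 𝒫^h(F_τ) = ∞, and 𝒫₀^h(F_τ) = 0 implies 𝒫^h(F_τ) = 0, where 𝒫₀^h is the packing pre-measure and 𝒫^h(F) = inf{ Σ_i 𝒫₀^h(F_i) : F ⊆ ⋃_i F_i }. -/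
open MeasureTheory ProbabilityTheory Set Filter
open scoped ENNReal NNReal

/-- A family of similarity IFSs on `ℝ^d` indexed by `Λ`, with at most `𝒩` maps each,
satisfying the uniform open set condition and uniform bounds on branching and contraction
ratios; the underlying data for random code-trees with necks. -/
structure CodeTreeSystem (d 𝒩 : ℕ) (Λ : Type*) [MeasurableSpace Λ] where
  h𝒩 : 0 < 𝒩
  N : Λ → ℕ
  hN𝒩 : ∀ l, N l ≤ 𝒩
  hNpos : ∀ l, 1 ≤ N l
  f : (l : Λ) → Fin (N l) → EuclideanSpace ℝ (Fin d) → EuclideanSpace ℝ (Fin d)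
  c : (l : Λ) → Fin (N l) → ℝ
  cmin : ℝ
  cmax : ℝ
  hcmin : 0 < cmin
  hcmax : cmax < 1
  hc : ∀ l i, c l i ∈ Set.Icc cmin cmax
  hbilip : ∀ l i x y, cmin * dist x y ≤ dist (f l i x) (f l i y) ∧
    dist (f l i x) (f l i y) ≤ cmax * dist x y
  /-- the open set of the uniform open set condition -/
  O : Set (EuclideanSpace ℝ (Fin d))
  hOopen : IsOpen O
  hOne : O.Nonempty
  hObdd : Bornology.IsBounded O
  hOsub : ∀ l i, f l i '' O ⊆ O
  hOdisj : ∀ l, Pairwise fun i j => Disjoint (f l i '' O) (f l j '' O)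
  /-- a large compact seed set -/
  Δ : Set (EuclideanSpace ℝ (Fin d))
  hΔcompact : IsCompact Δ
  hΔne : Δ.Nonempty
  hΔsub : ∀ l i, f l i '' Δ ⊆ Δ

namespace CodeTreeSystem

variable {d 𝒩 : ℕ} {Λ : Type*} [MeasurableSpace Λ]

/-- Whether a node `v` of the `𝒩`-ary tree survives in the code-tree labelled by `τ`. -/
def alive (R : CodeTreeSystem d 𝒩 Λ) : (List (Fin 𝒩) → Λ) → List (Fin 𝒩) → Bool
  | _, [] => true
  | τ, a :: v => decide ((a : ℕ) < R.N (τ [])) && R.alive (fun w => τ (a :: w)) v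

/-- The composition of maps coded by the node `v` in the code-tree labelled by `τ`
(dead branches act as the identity). -/
def nodeMap (R : CodeTreeSystem d 𝒩 Λ) :
    (List (Fin 𝒩) → Λ) → List (Fin 𝒩) →
      EuclideanSpace ℝ (Fin d) → EuclideanSpace ℝ (Fin d)
  | _, [] => id
  | τ, a :: v =>
      (if h : (a : ℕ) < R.N (τ []) then R.f (τ []) ⟨a, h⟩ else id) ∘
        R.nodeMap (fun w => τ (a :: w)) v

/-- The contraction ratio `c_e` of the composed map coded by the node `v`. -/
def crat (R : CodeTreeSystem d 𝒩 Λ) : (List (Fin 𝒩) → Λ) → List (Fin 𝒩) → ℝ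
  | _, [] => 1
  | τ, a :: v =>
      (if h : (a : ℕ) < R.N (τ []) then R.c (τ []) ⟨a, h⟩ else 1) *
        R.crat (fun w => τ (a :: w)) v

/-- The attractor `F_τ` of the code-tree labelled by `τ`. -/
def attractor (R : CodeTreeSystem d 𝒩 Λ) (τ : List (Fin 𝒩) → Λ) :
    Set (EuclideanSpace ℝ (Fin d)) :=
  ⋂ k : ℕ, ⋃ (v : Fin k → Fin 𝒩) (_ : R.alive τ (List.ofFn v) = true),
    R.nodeMap τ (List.ofFn v) '' R.Δ

/-- `n` is a neck level of the code-tree `τ`: all surviving level-`n` subtrees agree. -/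
def IsNeck (R : CodeTreeSystem d 𝒩 Λ) (τ : List (Fin 𝒩) → Λ) (n : ℕ) : Prop :=
  ∀ v w : List (Fin 𝒩), v.length = n → w.length = n →
    R.alive τ v = true → R.alive τ w = true → ∀ u, τ (v ++ u) = τ (w ++ u)

/-- The neck shift: shift the code-tree past its first neck level `N₁ τ`. -/
def neckShift (R : CodeTreeSystem d 𝒩 Λ) (N₁ : (List (Fin 𝒩) → Λ) → ℕ)
    (τ : List (Fin 𝒩) → Λ) : List (Fin 𝒩) → Λ :=
  fun w => τ (List.replicate (N₁ τ) (⟨0, R.h𝒩⟩ : Fin 𝒩) ++ w)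

/-- The sum `Σ_{e ∈ T_τ^n, alive} φ(c_e)` over the surviving level-`n` codings. -/
noncomputable def levelSum (R : CodeTreeSystem d 𝒩 Λ) (τ : List (Fin 𝒩) → Λ) (n : ℕ)
    (φ : ℝ → ℝ) : ℝ :=
  ∑ v : Fin n → Fin 𝒩,
    if R.alive τ (List.ofFn v) = true then φ (R.crat τ (List.ofFn v)) else 0

end CodeTreeSystem

/-- The Hausdorff measure associated with a gauge function `h`. -/
noncomputable def gaugeHausdorff {X : Type*} [EMetricSpace X] [MeasurableSpace X] [BorelSpace X]
    (h : ℝ → ℝ) : Measure X :=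
  Measure.mkMetric (fun r : ℝ≥0∞ => ENNReal.ofReal (h r.toReal))

/-- A gauge function: non-decreasing, positive on `(0,∞)`, tending to `0` at `0⁺`. -/
def IsGauge (h : ℝ → ℝ) : Prop :=
  Monotone h ∧ (∀ t, 0 < t → 0 < h t) ∧ Tendsto h (nhdsWithin 0 (Set.Ioi 0)) (nhds 0)

open scoped Topology

variable {X : Type*} [MetricSpace X]

/-- The `δ`-packing pre-measure for the gauge `h`: supremum of `Σ h(diam Bᵢ)` over countable
collections of disjoint closed balls centred in `F` with radii at most `δ`. -/
noncomputable def packPreδ (h : ℝ → ℝ) (δ : ℝ) (F : Set X) : ℝ≥0∞ :=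
  ⨆ (P : Set (X × ℝ)) (_ : P.Countable ∧ (∀ p ∈ P, p.1 ∈ F ∧ 0 < p.2 ∧ p.2 ≤ δ) ∧
      (∀ p ∈ P, ∀ q ∈ P, p ≠ q →
        Disjoint (Metric.closedBall p.1 p.2) (Metric.closedBall q.1 q.2))),
    ∑' p : P, ENNReal.ofReal (h (2 * (p : X × ℝ).2))

/-- The packing pre-measure `𝒫₀^h(F) = lim_{δ→0} 𝒫_δ^h(F)`. -/
noncomputable def packPre (h : ℝ → ℝ) (F : Set X) : ℝ≥0∞ :=
  ⨅ (δ : ℝ) (_ : 0 < δ), packPreδ h δ F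

/-- The packing measure `𝒫^h(F) = inf { Σᵢ 𝒫₀^h(Fᵢ) : F ⊆ ⋃ᵢ Fᵢ }`. -/
noncomputable def packMeasure (h : ℝ → ℝ) (F : Set X) : ℝ≥0∞ :=
  ⨅ (C : ℕ → Set X) (_ : F ⊆ ⋃ n, C n), ∑' n, packPre h (C n)
section PackingLemmas

open Metric

/-- The validity predicate of a `δ`-packing of `F`. -/
def IsPacking {Y : Type*} [MetricSpace Y] (δ : ℝ) (F : Set Y) (P : Set (Y × ℝ)) : Prop :=
  P.Countable ∧ (∀ p ∈ P, p.1 ∈ F ∧ 0 < p.2 ∧ p.2 ≤ δ) ∧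
    (∀ p ∈ P, ∀ q ∈ P, p ≠ q →
      Disjoint (Metric.closedBall p.1 p.2) (Metric.closedBall q.1 q.2))

lemma packPreδ_eq (h : ℝ → ℝ) (δ : ℝ) (F : Set X) :
    packPreδ h δ F =
      ⨆ (P : Set (X × ℝ)) (_ : IsPacking δ F P),
        ∑' p : P, ENNReal.ofReal (h (2 * (p : X × ℝ).2)) := rfl

lemma le_packPreδ (h : ℝ → ℝ) {δ : ℝ} {F : Set X} {P : Set (X × ℝ)}
    (hP : IsPacking δ F P) :
    ∑' p : P, ENNReal.ofReal (h (2 * (p : X × ℝ).2)) ≤ packPreδ h δ F := by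
  rw [packPreδ_eq]; exact le_iSup₂_of_le P hP le_rfl

lemma packPreδ_le {h : ℝ → ℝ} {δ : ℝ} {F : Set X} {c : ℝ≥0∞}
    (H : ∀ P : Set (X × ℝ), IsPacking δ F P →
      ∑' p : P, ENNReal.ofReal (h (2 * (p : X × ℝ).2)) ≤ c) :
    packPreδ h δ F ≤ c := by
  rw [packPreδ_eq]; exact iSup₂_le H

lemma packPreδ_mono_set {h : ℝ → ℝ} {δ : ℝ} {A B : Set X} (hAB : A ⊆ B) :
    packPreδ h δ A ≤ packPreδ h δ B := by
  refine packPreδ_le fun P hP => le_packPreδ h ⟨hP.1, fun p hp =>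
    ⟨hAB (hP.2.1 p hp).1, (hP.2.1 p hp).2⟩, hP.2.2⟩

lemma packPreδ_mono_δ {h : ℝ → ℝ} {δ δ' : ℝ} (hδ : δ ≤ δ') (A : Set X) :
    packPreδ h δ A ≤ packPreδ h δ' A := by
  refine packPreδ_le fun P hP => le_packPreδ h ⟨hP.1, fun p hp =>
    ⟨(hP.2.1 p hp).1, (hP.2.1 p hp).2.1, (hP.2.1 p hp).2.2.trans hδ⟩, hP.2.2⟩

lemma packPre_le_packPreδ (h : ℝ → ℝ) {δ : ℝ} (hδ : 0 < δ) (A : Set X) :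
    packPre h A ≤ packPreδ h δ A :=
  iInf₂_le δ hδ

lemma packPre_mono {h : ℝ → ℝ} {A B : Set X} (hAB : A ⊆ B) :
    packPre h A ≤ packPre h B :=
  le_iInf₂ fun δ hδ => (packPre_le_packPreδ h hδ A).trans (packPreδ_mono_set hAB)

lemma packPreδ_empty (h : ℝ → ℝ) (δ : ℝ) : packPreδ h δ (∅ : Set X) = 0 := by
  refine le_antisymm (packPreδ_le fun P hP => ?_) (zero_le)
  have : P = ∅ := by
    ext p; simp only [Set.mem_empty_iff_false, iff_false]
    exact fun hp => (hP.2.1 p hp).1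
  subst this
  simp

lemma packPre_empty (h : ℝ → ℝ) : packPre h (∅ : Set X) = 0 :=
  le_antisymm ((packPre_le_packPreδ h one_pos ∅).trans_eq (packPreδ_empty h 1)) (zero_le)

lemma packMeasure_le_packPre (h : ℝ → ℝ) (F : Set X) :
    packMeasure h F ≤ packPre h F := by
  have hcov : F ⊆ ⋃ n : ℕ, (if n = 0 then F else (∅ : Set X)) := by
    intro x hx
    exact Set.mem_iUnion.2 ⟨0, by simpa using hx⟩
  refine (iInf₂_le (fun n : ℕ => if n = 0 then F else (∅ : Set X)) hcov).trans ?_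
  have : ∀ n : ℕ, packPre h (if n = 0 then F else (∅ : Set X)) =
      if n = 0 then packPre h F else 0 := by
    intro n; split <;> simp [packPre_empty]
  rw [tsum_congr this, tsum_ite_eq]

lemma packPreδ_union_le (h : ℝ → ℝ) (δ : ℝ) (A B : Set X) :
    packPreδ h δ (A ∪ B) ≤ packPreδ h δ A + packPreδ h δ B := by
  refine packPreδ_le fun P hP => ?_
  obtain ⟨hc, hmem, hdisj⟩ := hP
  set P₁ : Set (X × ℝ) := {p ∈ P | p.1 ∈ A} with hP₁
  set P₂ : Set (X × ℝ) := {p ∈ P | p.1 ∉ A} with hP₂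
  have hPu : P = P₁ ∪ P₂ := by
    ext p; by_cases hp : p.1 ∈ A <;> simp [hP₁, hP₂, hp]
  have hd : Disjoint P₁ P₂ := by
    rw [Set.disjoint_left]; rintro p ⟨_, hpA⟩ ⟨_, hpA'⟩; exact hpA' hpA
  have hsub₁ : P₁ ⊆ P := fun p hp => hp.1
  have hsub₂ : P₂ ⊆ P := fun p hp => hp.1
  calc ∑' p : P, ENNReal.ofReal (h (2 * (p : X × ℝ).2))
      = ∑' p : ↥(P₁ ∪ P₂), ENNReal.ofReal (h (2 * (p : X × ℝ).2)) := by rw [← hPu]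
    _ = ∑' p : P₁, ENNReal.ofReal (h (2 * (p : X × ℝ).2)) +
        ∑' p : P₂, ENNReal.ofReal (h (2 * (p : X × ℝ).2)) :=
        ENNReal.summable.tsum_union_disjoint (f := fun p : X × ℝ => ENNReal.ofReal (h (2 * p.2))) hd ENNReal.summable
    _ ≤ packPreδ h δ A + packPreδ h δ B := by
        refine add_le_add ?_ ?_
        · refine le_packPreδ h ⟨hc.mono hsub₁, fun p hp => ⟨hp.2, (hmem p hp.1).2⟩,
            fun p hp q hq hne => hdisj p (hsub₁ hp) q (hsub₁ hq) hne⟩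
        · refine le_packPreδ h ⟨hc.mono hsub₂, fun p hp =>
            ⟨(hmem p hp.1).1.resolve_left hp.2, (hmem p hp.1).2⟩,
            fun p hp q hq hne => hdisj p (hsub₂ hp) q (hsub₂ hq) hne⟩

lemma packPre_union_top {h : ℝ → ℝ} {A B : Set X} (hT : packPre h (A ∪ B) = ⊤) :
    packPre h A = ⊤ ∨ packPre h B = ⊤ := by
  by_contra hcon
  push_neg at hcon
  obtain ⟨hA, hB⟩ := hcon
  have h1 : packPre h A < ⊤ := lt_top_iff_ne_top.2 hA
  have h2 : packPre h B < ⊤ := lt_top_iff_ne_top.2 hB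
  rw [packPre, iInf_lt_iff] at h1 h2
  obtain ⟨δ₁, h1⟩ := h1
  obtain ⟨δ₂, h2⟩ := h2
  rw [iInf_lt_iff] at h1 h2
  obtain ⟨hδ₁, h1⟩ := h1
  obtain ⟨hδ₂, h2⟩ := h2
  set δ := min δ₁ δ₂ with hδdef
  have hδ : 0 < δ := lt_min hδ₁ hδ₂
  have : packPre h (A ∪ B) < ⊤ := by
    refine (packPre_le_packPreδ h hδ _).trans_lt ?_
    refine (packPreδ_union_le h δ A B).trans_lt ?_
    exact ENNReal.add_lt_top.2 ⟨((packPreδ_mono_δ (min_le_left _ _) A).trans_lt h1),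
      ((packPreδ_mono_δ (min_le_right _ _) B).trans_lt h2)⟩
  exact absurd hT this.ne

lemma packPre_finUnion_top {h : ℝ → ℝ} {ι : Type*} (s : Finset ι) (A : ι → Set X)
    (hT : packPre h (⋃ i ∈ s, A i) = ⊤) : ∃ i ∈ s, packPre h (A i) = ⊤ := by
  classical
  induction s using Finset.induction_on with
  | empty => simp only [Finset.notMem_empty, Set.iUnion_of_empty, Set.iUnion_empty] at hT
             rw [packPre_empty] at hT; exact absurd hT (by simp)
  | @insert a s ha ih =>
      rw [Finset.set_biUnion_insert] at hT
      rcases packPre_union_top hT with h1 | h1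
      · exact ⟨a, Finset.mem_insert_self a s, h1⟩
      · obtain ⟨i, hi, hi'⟩ := ih h1
        exact ⟨i, Finset.mem_insert_of_mem hi, hi'⟩

end PackingLemmas
section PackingMap

variable {E : Type*} [NormedAddCommGroup E] [NormedSpace ℝ E]

lemma IsPacking.dist_lt {δ : ℝ} {F : Set E} {P : Set (E × ℝ)} (hP : IsPacking δ F P)
    {p q : E × ℝ} (hp : p ∈ P) (hq : q ∈ P) (hne : p ≠ q) :
    p.2 + q.2 < dist p.1 q.1 :=
  (disjoint_closedBall_closedBall_iff (hP.2.1 p hp).2.1.le (hP.2.1 q hq).2.1.le).1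
    (hP.2.2 p hp q hq hne)

lemma packPreδ_le_map (h : ℝ → ℝ) {δ δ' : ℝ} {F G : Set E} (T : E × ℝ → E × ℝ)
    (M : ℝ≥0∞)
    (hmem : ∀ p : E × ℝ, p.1 ∈ F → 0 < p.2 → p.2 ≤ δ →
      (T p).1 ∈ G ∧ 0 < (T p).2 ∧ (T p).2 ≤ δ')
    (hval : ∀ p : E × ℝ, p.1 ∈ F → 0 < p.2 → p.2 ≤ δ →
      ENNReal.ofReal (h (2 * p.2)) ≤ M * ENNReal.ofReal (h (2 * (T p).2)))
    (hsep : ∀ p q : E × ℝ, p.1 ∈ F → q.1 ∈ F → 0 < p.2 → 0 < q.2 → p.2 ≤ δ → q.2 ≤ δ →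
      p.2 + q.2 < dist p.1 q.1 → (T p).2 + (T q).2 < dist (T p).1 (T q).1) :
    packPreδ h δ F ≤ M * packPreδ h δ' G := by
  refine packPreδ_le fun P hP => ?_
  have hmemP : ∀ p ∈ P, p.1 ∈ F ∧ 0 < p.2 ∧ p.2 ≤ δ := hP.2.1
  have hsepP : ∀ p ∈ P, ∀ q ∈ P, p ≠ q → (T p).2 + (T q).2 < dist (T p).1 (T q).1 := by
    intro p hp q hq hne
    obtain ⟨h1, h2, h3⟩ := hmemP p hp
    obtain ⟨h1', h2', h3'⟩ := hmemP q hq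
    exact hsep p q h1 h1' h2 h2' h3 h3' (hP.dist_lt hp hq hne)
  have hinj : Set.InjOn T P := by
    intro p hp q hq hTeq
    by_contra hne
    have hlt := hsepP p hp q hq hne
    rw [hTeq, dist_self] at hlt
    have h2' := (hmem q (hmemP q hq).1 (hmemP q hq).2.1 (hmemP q hq).2.2).2.1
    have h2 := (hmem p (hmemP p hp).1 (hmemP p hp).2.1 (hmemP p hp).2.2).2.1
    rw [hTeq] at h2
    linarith
  have hP' : IsPacking δ' G (T '' P) := by
    refine ⟨hP.1.image T, ?_, ?_⟩
    · rintro p' ⟨p, hp, rfl⟩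
      obtain ⟨h1, h2, h3⟩ := hmemP p hp
      exact hmem p h1 h2 h3
    · rintro p' ⟨p, hp, rfl⟩ q' ⟨q, hq, rfl⟩ hne
      have hpq : p ≠ q := fun e => hne (by rw [e])
      exact Metric.closedBall_disjoint_closedBall (hsepP p hp q hq hpq)
  calc ∑' p : P, ENNReal.ofReal (h (2 * (p : E × ℝ).2))
      ≤ ∑' p : P, M * ENNReal.ofReal (h (2 * (T (p : E × ℝ)).2)) := by
        refine ENNReal.tsum_le_tsum fun p => ?_
        obtain ⟨h1, h2, h3⟩ := hmemP (p : E × ℝ) p.prop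
        exact hval _ h1 h2 h3
    _ = M * ∑' p : P, ENNReal.ofReal (h (2 * (T (p : E × ℝ)).2)) := ENNReal.tsum_mul_left
    _ = M * ∑' q : ↥(T '' P), ENNReal.ofReal (h (2 * (q : E × ℝ).2)) := by
        congr 1
        exact (tsum_image (fun q : E × ℝ => ENNReal.ofReal (h (2 * q.2))) hinj).symm
    _ ≤ M * packPreδ h δ' G := mul_le_mul_right (le_packPreδ h hP') _

lemma packPreδ_closure_le (h : ℝ → ℝ) {lam : ℝ} (hlam : 0 ≤ lam)
    (hdbl : ∀ x : ℝ, 0 < x → h (2 * x) ≤ lam * h x) {δ : ℝ} (A : Set E) :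
    packPreδ h δ (closure A) ≤ ENNReal.ofReal lam * packPreδ h δ A := by
  classical
  set T : E × ℝ → E × ℝ := fun p =>
    if hp : ∃ y ∈ A, dist y p.1 < p.2 / 4 then (hp.choose, p.2 / 2) else (p.1, p.2 / 2)
    with hT
  have hTspec : ∀ p : E × ℝ, p.1 ∈ closure A → 0 < p.2 →
      (T p).1 ∈ A ∧ dist (T p).1 p.1 < p.2 / 4 ∧ (T p).2 = p.2 / 2 := by
    intro p hp hr
    have hex : ∃ y ∈ A, dist y p.1 < p.2 / 4 := by
      obtain ⟨y, hy, hd⟩ := Metric.mem_closure_iff.1 hp (p.2 / 4) (by linarith)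
      exact ⟨y, hy, by rwa [dist_comm]⟩
    rw [hT]
    simp only [dif_pos hex]
    exact ⟨hex.choose_spec.1, hex.choose_spec.2, by trivial⟩
  refine packPreδ_le_map h T (ENNReal.ofReal lam) ?_ ?_ ?_
  · intro p h1 h2 h3
    obtain ⟨ha, _, hr⟩ := hTspec p h1 h2
    exact ⟨ha, by rw [hr]; linarith, by rw [hr]; linarith⟩
  · intro p h1 h2 h3
    obtain ⟨_, _, hr⟩ := hTspec p h1 h2
    rw [hr]
    have : (2 : ℝ) * (p.2 / 2) = p.2 := by ring
    rw [this, ← ENNReal.ofReal_mul hlam]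
    exact ENNReal.ofReal_le_ofReal (hdbl p.2 h2)
  · intro p q h1 h1' h2 h2' h3 h3' hlt
    obtain ⟨_, hd, hr⟩ := hTspec p h1 h2
    obtain ⟨_, hd', hr'⟩ := hTspec q h1' h2'
    rw [hr, hr']
    have htri : dist p.1 q.1 ≤ dist p.1 (T p).1 + dist (T p).1 (T q).1 + dist (T q).1 q.1 :=
      dist_triangle4 _ _ _ _
    rw [dist_comm p.1 (T p).1] at htri
    linarith

lemma packPreδ_image_le (h : ℝ → ℝ) (hmono : Monotone h) {C : ℝ} (hC : 0 < C) (hC1 : C ≤ 1)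
    {g : E → E} (hg : ∀ x y, dist (g x) (g y) ≤ C * dist x y) {δ : ℝ} (A : Set E) :
    packPreδ h δ (g '' A) ≤ packPreδ h (δ / C) A := by
  classical
  set T : E × ℝ → E × ℝ := fun p =>
    if hp : ∃ y ∈ A, g y = p.1 then (hp.choose, p.2 / C) else (p.1, p.2 / C) with hT
  have hTspec : ∀ p : E × ℝ, p.1 ∈ g '' A →
      (T p).1 ∈ A ∧ g (T p).1 = p.1 ∧ (T p).2 = p.2 / C := by
    intro p hp
    have hex : ∃ y ∈ A, g y = p.1 := by
      obtain ⟨y, hy, hgy⟩ := hp; exact ⟨y, hy, hgy⟩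
    rw [hT]
    simp only [dif_pos hex]
    exact ⟨hex.choose_spec.1, hex.choose_spec.2, by trivial⟩
  have key := packPreδ_le_map h T 1 ?_ ?_ ?_ (δ := δ) (δ' := δ / C) (F := g '' A) (G := A)
  · rwa [one_mul] at key
  · intro p h1 h2 h3
    obtain ⟨ha, _, hr⟩ := hTspec p h1
    refine ⟨ha, by rw [hr]; positivity, by rw [hr]; gcongr⟩
  · intro p h1 h2 h3
    rw [one_mul]
    obtain ⟨_, _, hr⟩ := hTspec p h1
    rw [hr]
    refine ENNReal.ofReal_le_ofReal (hmono ?_)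
    have hpc : p.2 ≤ p.2 / C := (le_div_iff₀ hC).2 (by nlinarith)
    linarith
  · intro p q h1 h1' h2 h2' h3 h3' hlt
    obtain ⟨_, hgp, hr⟩ := hTspec p h1
    obtain ⟨_, hgq, hr'⟩ := hTspec q h1'
    rw [hr, hr']
    have hdist : dist p.1 q.1 ≤ C * dist (T p).1 (T q).1 := by
      rw [← hgp, ← hgq]; exact hg _ _
    rw [← add_div, div_lt_iff₀ hC]
    calc (p.2 + q.2) < dist p.1 q.1 := hlt
      _ ≤ C * dist (T p).1 (T q).1 := hdist
      _ = dist (T p).1 (T q).1 * C := mul_comm _ _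

lemma packPreδ_le_expand (h : ℝ → ℝ) (hmono : Monotone h) {lam : ℝ} (hlam : 0 ≤ lam)
    (hdbl : ∀ x : ℝ, 0 < x → h (2 * x) ≤ lam * h x) {c' : ℝ} (hc : 0 < c') (hc1 : c' ≤ 1)
    {g : E → E} (hg : ∀ x y, c' * dist x y ≤ dist (g x) (g y)) {k : ℕ} (hk : 1 ≤ c' * 2 ^ k)
    {δ : ℝ} (A : Set E) :
    packPreδ h δ A ≤ (ENNReal.ofReal lam) ^ k * packPreδ h δ (g '' A) := by
  have hiter : ∀ j : ℕ, ∀ x : ℝ, 0 < x → h (2 ^ j * x) ≤ lam ^ j * h x := by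
    intro j
    induction j with
    | zero => intro x hx; simp
    | succ n ih =>
        intro x hx
        have he : (2 : ℝ) ^ (n + 1) * x = 2 * (2 ^ n * x) := by ring
        rw [he]
        calc h (2 * (2 ^ n * x)) ≤ lam * h (2 ^ n * x) := hdbl _ (by positivity)
          _ ≤ lam * (lam ^ n * h x) := mul_le_mul_of_nonneg_left (ih x hx) hlam
          _ = lam ^ (n + 1) * h x := by ring
  set T : E × ℝ → E × ℝ := fun p => (g p.1, c' * p.2) with hT
  refine packPreδ_le_map h T _ ?_ ?_ ?_
  · intro p h1 h2 h3
    have hTp : (T p).2 = c' * p.2 := rfl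
    rw [hTp]
    exact ⟨Set.mem_image_of_mem g h1, by positivity, by nlinarith⟩
  · intro p h1 h2 h3
    show ENNReal.ofReal (h (2 * p.2)) ≤ _ * ENNReal.ofReal (h (2 * (c' * p.2)))
    have hle : h (2 * p.2) ≤ lam ^ k * h (2 * (c' * p.2)) := by
      have e1 : (2 : ℝ) * p.2 = 2 ^ k * (2 * p.2 / 2 ^ k) := by
        field_simp
      calc h (2 * p.2) = h (2 ^ k * (2 * p.2 / 2 ^ k)) := by rw [← e1]
        _ ≤ lam ^ k * h (2 * p.2 / 2 ^ k) := hiter k _ (by positivity)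
        _ ≤ lam ^ k * h (2 * (c' * p.2)) := by
            refine mul_le_mul_of_nonneg_left (hmono ?_) (by positivity)
            rw [div_le_iff₀ (by positivity : (0:ℝ) < 2 ^ k)]
            nlinarith
    calc ENNReal.ofReal (h (2 * p.2)) ≤ ENNReal.ofReal (lam ^ k * h (2 * (c' * p.2))) :=
          ENNReal.ofReal_le_ofReal hle
      _ = ENNReal.ofReal (lam ^ k) * ENNReal.ofReal (h (2 * (c' * p.2))) :=
          ENNReal.ofReal_mul (by positivity)
      _ = (ENNReal.ofReal lam) ^ k * ENNReal.ofReal (h (2 * (c' * p.2))) := by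
          rw [ENNReal.ofReal_pow hlam]
  · intro p q h1 h1' h2 h2' h3 h3' hlt
    show c' * p.2 + c' * q.2 < dist (g p.1) (g q.1)
    calc c' * p.2 + c' * q.2 = c' * (p.2 + q.2) := by ring
      _ < c' * dist p.1 q.1 := by nlinarith
      _ ≤ dist (g p.1) (g q.1) := hg _ _

lemma packPre_closure_top (h : ℝ → ℝ) {lam : ℝ} (hlam : 0 ≤ lam)
    (hdbl : ∀ x : ℝ, 0 < x → h (2 * x) ≤ lam * h x) {A : Set E}
    (hTop : packPre h (closure A) = ⊤) : packPre h A = ⊤ := by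
  by_contra hA
  have h1 : packPre h A < ⊤ := lt_top_iff_ne_top.2 hA
  rw [packPre, iInf_lt_iff] at h1
  obtain ⟨δ, h1⟩ := h1
  rw [iInf_lt_iff] at h1
  obtain ⟨hδ, h1⟩ := h1
  have : packPre h (closure A) < ⊤ := by
    refine (packPre_le_packPreδ h hδ _).trans_lt ?_
    refine (packPreδ_closure_le h hlam hdbl A).trans_lt ?_
    exact ENNReal.mul_lt_top ENNReal.ofReal_lt_top h1
  exact absurd hTop this.ne

lemma packPre_image_lip_top (h : ℝ → ℝ) (hmono : Monotone h) {C : ℝ} (hC : 0 < C)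
    (hC1 : C ≤ 1) {g : E → E} (hg : ∀ x y, dist (g x) (g y) ≤ C * dist x y) {A : Set E}
    (hTop : packPre h (g '' A) = ⊤) : packPre h A = ⊤ := by
  by_contra hA
  have h1 : packPre h A < ⊤ := lt_top_iff_ne_top.2 hA
  rw [packPre, iInf_lt_iff] at h1
  obtain ⟨δ, h1⟩ := h1
  rw [iInf_lt_iff] at h1
  obtain ⟨hδ, h1⟩ := h1
  have : packPre h (g '' A) < ⊤ := by
    have h2 : packPreδ h (C * δ) (g '' A) ≤ packPreδ h δ A := by
      have h3 := packPreδ_image_le h hmono hC hC1 hg (δ := C * δ) A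
      rwa [mul_div_cancel_left₀ _ hC.ne'] at h3
    exact ((packPre_le_packPreδ h (by positivity) _).trans h2).trans_lt h1
  exact absurd hTop this.ne

lemma packPre_expand_top (h : ℝ → ℝ) (hmono : Monotone h) {lam : ℝ} (hlam : 0 ≤ lam)
    (hdbl : ∀ x : ℝ, 0 < x → h (2 * x) ≤ lam * h x) {c' : ℝ} (hc : 0 < c') (hc1 : c' ≤ 1)
    {g : E → E} (hg : ∀ x y, c' * dist x y ≤ dist (g x) (g y)) {A : Set E}
    (hTop : packPre h A = ⊤) : packPre h (g '' A) = ⊤ := by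
  obtain ⟨k, hk⟩ := pow_unbounded_of_one_lt (1 / c') (one_lt_two (α := ℝ))
  have hk' : 1 ≤ c' * 2 ^ k := by
    rw [div_lt_iff₀ hc] at hk
    nlinarith
  by_contra hA
  have h1 : packPre h (g '' A) < ⊤ := lt_top_iff_ne_top.2 hA
  rw [packPre, iInf_lt_iff] at h1
  obtain ⟨δ, h1⟩ := h1
  rw [iInf_lt_iff] at h1
  obtain ⟨hδ, h1⟩ := h1
  have : packPre h A < ⊤ := by
    refine (packPre_le_packPreδ h hδ _).trans_lt ?_
    refine (packPreδ_le_expand h hmono hlam hdbl hc hc1 hg hk' A).trans_lt ?_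
    exact ENNReal.mul_lt_top (ENNReal.pow_lt_top ENNReal.ofReal_lt_top) h1
  exact absurd hTop this.ne

end PackingMap
namespace CodeTreeSystem

variable {d 𝒩 : ℕ} {Λ : Type*} [MeasurableSpace Λ] (R : CodeTreeSystem d 𝒩 Λ)

lemma alive_append (τ : List (Fin 𝒩) → Λ) (v w : List (Fin 𝒩)) :
    R.alive τ (v ++ w) = (R.alive τ v && R.alive (fun u => τ (v ++ u)) w) := by
  induction v generalizing τ with
  | nil => simp [alive]
  | cons a v ih =>
      show R.alive τ (a :: (v ++ w)) = _
      rw [alive, alive, ih (fun u => τ (a :: u)), Bool.and_assoc]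
      rfl

lemma nodeMap_append (τ : List (Fin 𝒩) → Λ) (v w : List (Fin 𝒩)) :
    R.nodeMap τ (v ++ w) = R.nodeMap τ v ∘ R.nodeMap (fun u => τ (v ++ u)) w := by
  induction v generalizing τ with
  | nil => rfl
  | cons a v ih =>
      show R.nodeMap τ (a :: (v ++ w)) = _
      rw [nodeMap, nodeMap, ih (fun u => τ (a :: u))]
      rfl

lemma alive_prefix {τ : List (Fin 𝒩) → Λ} {v w : List (Fin 𝒩)}
    (hvw : R.alive τ (v ++ w) = true) : R.alive τ v = true := by
  rw [alive_append, Bool.and_eq_true] at hvw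
  exact hvw.1

lemma alive_suffix {τ : List (Fin 𝒩) → Λ} {v w : List (Fin 𝒩)}
    (hvw : R.alive τ (v ++ w) = true) : R.alive (fun u => τ (v ++ u)) w = true := by
  rw [alive_append, Bool.and_eq_true] at hvw
  exact hvw.2

lemma nodeMap_image_Δ_subset (τ : List (Fin 𝒩) → Λ) (v : List (Fin 𝒩)) :
    R.nodeMap τ v '' R.Δ ⊆ R.Δ := by
  induction v generalizing τ with
  | nil => simp [nodeMap]
  | cons a v ih =>
      rw [nodeMap, Set.image_comp]
      refine subset_trans (Set.image_mono (ih _)) ?_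
      split_ifs with hN
      · exact R.hΔsub _ _
      · simp

lemma cmin_le_cmax (τ : List (Fin 𝒩) → Λ) : R.cmin ≤ R.cmax := by
  have := R.hc (τ []) ⟨0, R.hNpos _⟩
  exact this.1.trans this.2

lemma nodeMap_lower (τ : List (Fin 𝒩) → Λ) (v : List (Fin 𝒩))
    (x y : EuclideanSpace ℝ (Fin d)) :
    R.cmin ^ v.length * dist x y ≤ dist (R.nodeMap τ v x) (R.nodeMap τ v y) := by
  have hcm1 : R.cmin ≤ 1 := ((R.cmin_le_cmax τ).trans R.hcmax.le)
  induction v generalizing τ with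
  | nil => simp [nodeMap]
  | cons a v ih =>
      have h1 := ih (fun w => τ (a :: w))
      rw [nodeMap]
      simp only [Function.comp_apply, List.length_cons]
      set x' := R.nodeMap (fun w => τ (a :: w)) v x with hx'
      set y' := R.nodeMap (fun w => τ (a :: w)) v y with hy'
      split_ifs with hN
      · have h2 := (R.hbilip (τ []) ⟨a, hN⟩ x' y').1
        have hp : (0:ℝ) ≤ R.cmin ^ v.length := pow_nonneg R.hcmin.le _
        calc R.cmin ^ (v.length + 1) * dist x y
            = R.cmin * (R.cmin ^ v.length * dist x y) := by ring
          _ ≤ R.cmin * dist x' y' := by nlinarith [R.hcmin]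
          _ ≤ dist (R.f (τ []) ⟨a, hN⟩ x') (R.f (τ []) ⟨a, hN⟩ y') := h2
      · show R.cmin ^ (v.length + 1) * dist x y ≤ dist x' y'
        calc R.cmin ^ (v.length + 1) * dist x y
            ≤ R.cmin ^ v.length * dist x y :=
              mul_le_mul_of_nonneg_right
                (pow_le_pow_of_le_one R.hcmin.le hcm1 (Nat.le_succ _)) dist_nonneg
          _ ≤ dist x' y' := h1
      
lemma nodeMap_upper (τ : List (Fin 𝒩) → Λ) (v : List (Fin 𝒩))
    (hv : R.alive τ v = true) (x y : EuclideanSpace ℝ (Fin d)) :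
    dist (R.nodeMap τ v x) (R.nodeMap τ v y) ≤ R.cmax ^ v.length * dist x y := by
  have hc0 : (0:ℝ) ≤ R.cmax := R.hcmin.le.trans (R.cmin_le_cmax τ)
  induction v generalizing τ with
  | nil => simp [nodeMap]
  | cons a v ih =>
      rw [alive, Bool.and_eq_true, decide_eq_true_eq] at hv
      obtain ⟨hN, hv⟩ := hv
      rw [nodeMap]
      simp only [Function.comp_apply, List.length_cons, dif_pos hN]
      set x' := R.nodeMap (fun w => τ (a :: w)) v x with hx'
      set y' := R.nodeMap (fun w => τ (a :: w)) v y with hy'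
      have h1 := ih (fun w => τ (a :: w)) hv
      have h2 := (R.hbilip (τ []) ⟨a, hN⟩ x' y').2
      have hp : (0:ℝ) ≤ R.cmax ^ v.length := by positivity
      calc dist (R.f (τ []) ⟨a, hN⟩ x') (R.f (τ []) ⟨a, hN⟩ y')
          ≤ R.cmax * dist x' y' := h2
        _ ≤ R.cmax * (R.cmax ^ v.length * dist x y) := by nlinarith
        _ = R.cmax ^ (v.length + 1) * dist x y := by ring

lemma nodeMap_injective (τ : List (Fin 𝒩) → Λ) (v : List (Fin 𝒩)) :
    Function.Injective (R.nodeMap τ v) := by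
  intro x y hxy
  have := R.nodeMap_lower τ v x y
  rw [hxy, dist_self] at this
  have hd : dist x y ≤ 0 := by
    by_contra hd
    push_neg at hd
    have : (0:ℝ) < R.cmin ^ v.length * dist x y := by
      have : (0:ℝ) < R.cmin ^ v.length := pow_pos R.hcmin _
      positivity
    linarith
  exact dist_le_zero.1 hd

lemma mem_attractor_iff_list {τ : List (Fin 𝒩) → Λ} {x : EuclideanSpace ℝ (Fin d)} :
    x ∈ R.attractor τ ↔ ∀ k : ℕ, ∃ u : List (Fin 𝒩), u.length = k ∧
      R.alive τ u = true ∧ x ∈ R.nodeMap τ u '' R.Δ := by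
  constructor
  · intro hx k
    have := Set.mem_iInter.1 hx k
    simp only [Set.mem_iUnion] at this
    obtain ⟨v, hv, hx'⟩ := this
    exact ⟨List.ofFn v, List.length_ofFn, hv, hx'⟩
  · intro H
    refine Set.mem_iInter.2 fun k => ?_
    obtain ⟨u, hlen, halive, hmem⟩ := H k
    subst hlen
    simp only [Set.mem_iUnion]
    exact ⟨u.get, by rwa [List.ofFn_get], by rwa [List.ofFn_get]⟩

lemma attractor_subset_Δ (τ : List (Fin 𝒩) → Λ) : R.attractor τ ⊆ R.Δ := by
  intro x hx
  obtain ⟨u, hlen, _, hmem⟩ := (R.mem_attractor_iff_list.1 hx) 0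
  rw [List.length_eq_zero_iff.1 hlen] at hmem
  simpa [nodeMap] using hmem

lemma mem_attractor_of_piece {τ : List (Fin 𝒩) → Λ} {v : List (Fin 𝒩)}
    (hv : R.alive τ v = true) {y : EuclideanSpace ℝ (Fin d)}
    (hy : y ∈ R.attractor (fun u => τ (v ++ u))) : R.nodeMap τ v y ∈ R.attractor τ := by
  have hyΔ : y ∈ R.Δ := R.attractor_subset_Δ _ hy
  rw [mem_attractor_iff_list] at hy ⊢
  intro k
  rcases le_or_gt k v.length with hk | hk
  · refine ⟨v.take k, by simp [List.length_take]; omega, ?_, ?_⟩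
    · have := hv
      rw [← List.take_append_drop k v] at this
      exact R.alive_prefix this
    · have heq : R.nodeMap τ v y =
          R.nodeMap τ (v.take k)
            (R.nodeMap (fun u => τ (v.take k ++ u)) (v.drop k) y) := by
        conv_lhs => rw [← List.take_append_drop k v]
        rw [nodeMap_append]
        rfl
      rw [heq]
      exact Set.mem_image_of_mem _
        (R.nodeMap_image_Δ_subset _ _ (Set.mem_image_of_mem _ hyΔ))
  · obtain ⟨w, hwlen, hwalive, z, hz, hzeq⟩ := hy (k - v.length)
    refine ⟨v ++ w, by simp [hwlen]; omega, ?_, ?_⟩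
    · rw [alive_append, hv, hwalive]
      rfl
    · rw [nodeMap_append]
      exact ⟨z, hz, by simp [Function.comp, hzeq]⟩

/-- The level-`k` set of the code-tree. -/
def levelSet (R : CodeTreeSystem d 𝒩 Λ) (τ : List (Fin 𝒩) → Λ) (k : ℕ) :
    Set (EuclideanSpace ℝ (Fin d)) :=
  ⋃ (u : List (Fin 𝒩)) (_ : u.length = k ∧ R.alive τ u = true), R.nodeMap τ u '' R.Δ

lemma mem_attractor_iff_levelSet {τ : List (Fin 𝒩) → Λ} {x : EuclideanSpace ℝ (Fin d)} :
    x ∈ R.attractor τ ↔ ∀ k : ℕ, x ∈ R.levelSet τ k := by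
  rw [mem_attractor_iff_list]
  refine forall_congr' fun k => ?_
  simp [levelSet, and_assoc]

lemma levelSet_succ_subset (τ : List (Fin 𝒩) → Λ) (k : ℕ) :
    R.levelSet τ (k + 1) ⊆ R.levelSet τ k := by
  intro x hx
  simp only [levelSet, Set.mem_iUnion] at hx ⊢
  obtain ⟨u, ⟨hlen, halive⟩, hmem⟩ := hx
  have hune : u ≠ [] := by intro e; rw [e] at hlen; simp at hlen
  have hu : u = u.dropLast ++ [u.getLast hune] := (List.dropLast_append_getLast hune).symm
  refine ⟨u.dropLast, ⟨by rw [List.length_dropLast, hlen]; omega, ?_⟩, ?_⟩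
  · rw [hu] at halive
    exact R.alive_prefix halive
  · rw [hu, nodeMap_append, Set.image_comp] at hmem
    exact Set.image_mono (R.nodeMap_image_Δ_subset _ _) hmem

lemma levelSet_antitone (τ : List (Fin 𝒩) → Λ) : Antitone (R.levelSet τ) :=
  antitone_nat_of_succ_le fun k => R.levelSet_succ_subset τ k

end CodeTreeSystem
namespace CodeTreeSystem

variable {d 𝒩 : ℕ} {Λ : Type*} [MeasurableSpace Λ] (R : CodeTreeSystem d 𝒩 Λ)

lemma attractor_subset_pieces (τ : List (Fin 𝒩) → Λ) (n : ℕ)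
    {x : EuclideanSpace ℝ (Fin d)} (hx : x ∈ R.attractor τ) :
    ∃ v : List (Fin 𝒩), v.length = n ∧ R.alive τ v = true ∧
      x ∈ R.nodeMap τ v '' R.attractor (fun u => τ (v ++ u)) := by
  classical
  set S : ℕ → Set (List (Fin 𝒩)) := fun k =>
    {v | v.length = n ∧ R.alive τ v = true ∧
      x ∈ R.nodeMap τ v '' R.levelSet (fun u => τ (v ++ u)) k} with hS
  have hSfin : (S 0).Finite :=
    (List.finite_length_eq (Fin 𝒩) n).subset fun v hv => hv.1
  have hSne : ∀ k, (S k).Nonempty := by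
    intro k
    obtain ⟨u, hlen, halive, z, hz, hzeq⟩ := R.mem_attractor_iff_list.1 hx (n + k)
    refine ⟨u.take n, ?_, ?_, ?_⟩
    · rw [List.length_take]; omega
    · have h2 := halive
      rw [← List.take_append_drop n u] at h2
      exact R.alive_prefix h2
    · have halive2 : R.alive (fun w => τ (u.take n ++ w)) (u.drop n) = true := by
        have h2 := halive
        rw [← List.take_append_drop n u] at h2
        exact R.alive_suffix h2
      refine ⟨R.nodeMap (fun w => τ (u.take n ++ w)) (u.drop n) z, ?_, ?_⟩
      · simp only [levelSet, Set.mem_iUnion]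
        exact ⟨u.drop n, ⟨by rw [List.length_drop]; omega, halive2⟩,
          Set.mem_image_of_mem _ hz⟩
      · rw [← hzeq]
        conv_rhs => rw [← List.take_append_drop n u]
        rw [nodeMap_append]
        rfl
  have hSanti : ∀ k, S (k + 1) ⊆ S k := by
    intro k v hv
    exact ⟨hv.1, hv.2.1, Set.image_mono (R.levelSet_succ_subset _ k) hv.2.2⟩
  have hSmono : ∀ {j k : ℕ}, j ≤ k → S k ⊆ S j := by
    intro j k hjk
    induction hjk with
    | refl => exact subset_rfl
    | step _ ih => exact (hSanti _).trans ih
  have hinter : (⋂ k, S k).Nonempty := by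
    by_contra hcon
    rw [Set.not_nonempty_iff_eq_empty] at hcon
    have hforall : ∀ v ∈ S 0, ∃ k, v ∉ S k := by
      intro v hv
      by_contra hcon2
      push_neg at hcon2
      have hmem : v ∈ ⋂ k, S k := Set.mem_iInter.2 hcon2
      rw [hcon] at hmem
      exact hmem
    choose! kv hkv using hforall
    set K := hSfin.toFinset.sup kv with hKdef
    obtain ⟨v, hvK⟩ := hSne K
    have hv0 : v ∈ S 0 := hSmono (Nat.zero_le K) hvK
    have hle : kv v ≤ K := Finset.le_sup (hSfin.mem_toFinset.2 hv0)
    exact hkv v hv0 (hSmono hle hvK)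
  obtain ⟨v, hv⟩ := hinter
  obtain ⟨hlen, halive, -⟩ := Set.mem_iInter.1 hv 0
  refine ⟨v, hlen, halive, ?_⟩
  have hxk : ∀ k, x ∈ R.nodeMap τ v '' R.levelSet (fun u => τ (v ++ u)) k :=
    fun k => (Set.mem_iInter.1 hv k).2.2
  obtain ⟨y, hy0, hyeq⟩ := hxk 0
  refine ⟨y, ?_, hyeq⟩
  rw [mem_attractor_iff_levelSet]
  intro k
  obtain ⟨y', hy', hyeq'⟩ := hxk k
  have heq : y' = y := R.nodeMap_injective τ v (by rw [hyeq', hyeq])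
  rwa [← heq]

lemma attractor_neck_eq {τ : List (Fin 𝒩) → Λ} {m : ℕ} (hneck : R.IsNeck τ m)
    {v w : List (Fin 𝒩)} (hv : v.length = m) (hw : w.length = m)
    (hva : R.alive τ v = true) (hwa : R.alive τ w = true) :
    R.attractor (fun u => τ (v ++ u)) = R.attractor (fun u => τ (w ++ u)) := by
  have he : (fun u => τ (v ++ u)) = (fun u => τ (w ++ u)) :=
    funext (hneck v w hv hw hva hwa)
  rw [he]

lemma nodeMap_continuous (τ : List (Fin 𝒩) → Λ) (v : List (Fin 𝒩)) :
    Continuous (R.nodeMap τ v) := by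
  induction v generalizing τ with
  | nil => exact continuous_id
  | cons a v ih =>
      rw [nodeMap]
      refine Continuous.comp ?_ (ih _)
      split_ifs with hN
      · have hc0 : (0:ℝ) ≤ R.cmax := R.hcmin.le.trans (R.cmin_le_cmax τ)
        refine LipschitzWith.continuous (K := ⟨R.cmax, hc0⟩) ?_
        refine LipschitzWith.of_dist_le_mul fun x y => ?_
        exact (R.hbilip _ _ x y).2
      · exact continuous_id

lemma isCompact_attractor (τ : List (Fin 𝒩) → Λ) : IsCompact (R.attractor τ) := by
  have hlev : ∀ k : ℕ, IsCompact (⋃ (v : Fin k → Fin 𝒩)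
      (_ : R.alive τ (List.ofFn v) = true), R.nodeMap τ (List.ofFn v) '' R.Δ) := by
    intro k
    refine isCompact_iUnion fun v => ?_
    rw [Set.iUnion_eq_if]
    split_ifs
    · exact R.hΔcompact.image (R.nodeMap_continuous _ _)
    · exact isCompact_empty
  refine IsCompact.of_isClosed_subset R.hΔcompact ?_ (R.attractor_subset_Δ τ)
  exact isClosed_iInter fun k => (hlev k).isClosed

end CodeTreeSystem

lemma exists_ofFn_eq {α : Type*} (w : List α) {m : ℕ} (hlen : w.length = m) :
    ∃ f : Fin m → α, List.ofFn f = w := by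
  subst hlen
  exact ⟨w.get, List.ofFn_get w⟩
/-- zero–infinity dichotomy transfer for the packing measure of a random
code-tree attractor built from uniformly bi-Lipschitz contractions: for any doubling gauge
function `h`, `𝒫₀^h(F_τ) = ∞` implies `𝒫^h(F_τ) = ∞` and `𝒫₀^h(F_τ) = 0` implies
`𝒫^h(F_τ) = 0`. -/
theorem packing_dichotomy_transfer {d 𝒩 : ℕ} {Λ : Type*} [MeasurableSpace Λ]
    (R : CodeTreeSystem d 𝒩 Λ) (τ : List (Fin 𝒩) → Λ)
    (hnecks : ∀ n : ℕ, ∃ m, n ≤ m ∧ R.IsNeck τ m)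
    (hne : (R.attractor τ).Nonempty)
    (h : ℝ → ℝ) (hgauge : IsGauge h)
    (hdoubling : ∃ lam : ℝ, 1 < lam ∧ ∀ x : ℝ, 0 < x → h (2 * x) ≤ lam * h x) :
    (packPre h (R.attractor τ) = ⊤ → packMeasure h (R.attractor τ) = ⊤) ∧
    (packPre h (R.attractor τ) = 0 → packMeasure h (R.attractor τ) = 0) := by
  classical
  obtain ⟨lam, hlam1, hdbl⟩ := hdoubling
  have hlam0 : (0:ℝ) ≤ lam := by linarith
  obtain ⟨hmono, hposg, -⟩ := hgauge
  constructor
  swap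
  · intro h0
    exact le_antisymm ((packMeasure_le_packPre h _).trans h0.le) (zero_le)
  intro hTopF
  have hcmM : R.cmin ≤ R.cmax := R.cmin_le_cmax τ
  have hcmax0 : (0:ℝ) < R.cmax := lt_of_lt_of_le R.hcmin hcmM
  have hcmin1 : R.cmin ≤ 1 := hcmM.trans R.hcmax.le
  have hcomp : IsCompact (R.attractor τ) := R.isCompact_attractor τ
  rw [packMeasure, eq_top_iff]
  refine le_iInf₂ fun C hC => ?_
  suffices hsuff : ∃ n, packPre h (C n) = ⊤ by
    obtain ⟨n, hn⟩ := hsuff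
    calc (⊤ : ℝ≥0∞) = packPre h (C n) := hn.symm
      _ ≤ ∑' n, packPre h (C n) := ENNReal.le_tsum n
  -- Baire category on the compact attractor
  haveI : Nonempty ↥(R.attractor τ) := hne.to_subtype
  haveI : CompactSpace ↥(R.attractor τ) := isCompact_iff_compactSpace.1 hcomp
  have hU : (⋃ n : ℕ,
      closure ((Subtype.val : ↥(R.attractor τ) → EuclideanSpace ℝ (Fin d)) ⁻¹' C n)) =
      Set.univ := by
    refine Set.eq_univ_iff_forall.2 fun z => ?_
    obtain ⟨n, hn⟩ := Set.mem_iUnion.1 (hC z.2)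
    exact Set.mem_iUnion.2 ⟨n, subset_closure hn⟩
  obtain ⟨n, hnint⟩ := nonempty_interior_of_iUnion_of_closed
      (f := fun n : ℕ =>
        closure ((Subtype.val : ↥(R.attractor τ) → EuclideanSpace ℝ (Fin d)) ⁻¹' C n))
      (fun n => isClosed_closure) hU
  obtain ⟨z, hz⟩ := hnint
  obtain ⟨ε, hε, hball⟩ := Metric.isOpen_iff.1 isOpen_interior z hz
  have hball' : Metric.ball z ε ⊆ closure (Subtype.val ⁻¹' C n) :=
    hball.trans interior_subset
  have hkey : R.attractor τ ∩ Metric.ball (z : EuclideanSpace ℝ (Fin d)) ε ⊆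
      closure (R.attractor τ ∩ C n) := by
    rintro y ⟨hyF, hyb⟩
    have h1 : (⟨y, hyF⟩ : ↥(R.attractor τ)) ∈ Metric.ball z ε := by
      rw [Metric.mem_ball, Subtype.dist_eq]
      exact hyb
    have h2 := hball' h1
    have h3 := image_closure_subset_closure_image
        (f := (Subtype.val : ↥(R.attractor τ) → EuclideanSpace ℝ (Fin d)))
        continuous_subtype_val (Set.mem_image_of_mem _ h2)
    rwa [Set.image_preimage_eq_inter_range, Subtype.range_coe, Set.inter_comm] at h3
  -- choose a neck level with small cylinders
  have hD0 : (0:ℝ) ≤ Metric.diam R.Δ := Metric.diam_nonneg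
  obtain ⟨m₀, hm₀⟩ := exists_pow_lt_of_lt_one
      (show (0:ℝ) < ε / (Metric.diam R.Δ + 1) by positivity) R.hcmax
  obtain ⟨m, hmm, hneck⟩ := hnecks m₀
  have hpow : R.cmax ^ m * (Metric.diam R.Δ + 1) < ε := by
    have h1 : R.cmax ^ m ≤ R.cmax ^ m₀ := pow_le_pow_of_le_one hcmax0.le R.hcmax.le hmm
    have h2 : R.cmax ^ m₀ * (Metric.diam R.Δ + 1) < ε := by
      rw [lt_div_iff₀ (by positivity : (0:ℝ) < Metric.diam R.Δ + 1)] at hm₀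
      exact hm₀
    calc R.cmax ^ m * (Metric.diam R.Δ + 1)
        ≤ R.cmax ^ m₀ * (Metric.diam R.Δ + 1) := by nlinarith
      _ < ε := h2
  -- the cylinder containing z
  have hzF : (z : EuclideanSpace ℝ (Fin d)) ∈ R.attractor τ := z.2
  obtain ⟨v, hvlen, hvalive, a, haΔ, haeq⟩ := R.mem_attractor_iff_list.1 hzF m
  -- finite decomposition of the attractor at level m
  set s : Finset (List (Fin 𝒩)) :=
    ((Finset.univ : Finset (Fin m → Fin 𝒩)).image List.ofFn).filter
      (fun w => R.alive τ w = true) with hs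
  have hcover : R.attractor τ ⊆
      ⋃ w ∈ s, R.nodeMap τ w '' R.attractor (fun u => τ (w ++ u)) := by
    intro x hx
    obtain ⟨w, hwlen, hwalive, hwmem⟩ := R.attractor_subset_pieces τ m hx
    obtain ⟨fw, hfw⟩ := exists_ofFn_eq w hwlen
    have hwin : w ∈ s := by
      rw [hs, Finset.mem_filter]
      exact ⟨Finset.mem_image.2 ⟨fw, Finset.mem_univ _, hfw⟩, hwalive⟩
    exact Set.mem_biUnion hwin hwmem
  have hle := packPre_mono (h := h) hcover
  rw [hTopF, top_le_iff] at hle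
  obtain ⟨w, hws, hwtop⟩ := packPre_finUnion_top s _ hle
  have hwalive : R.alive τ w = true := by
    have := (Finset.mem_filter.1 (hs ▸ hws)).2
    simpa using this
  have hwlen : w.length = m := by
    obtain ⟨fw, -, hfw⟩ := Finset.mem_image.1 (Finset.mem_filter.1 (hs ▸ hws)).1
    rw [← hfw, List.length_ofFn]
  -- transfer infinite pre-measure to the shifted attractor
  have hAw : packPre h (R.attractor (fun u => τ (w ++ u))) = ⊤ := by
    refine packPre_image_lip_top h hmono (C := R.cmax ^ m) (pow_pos hcmax0 m)
      (pow_le_one₀ hcmax0.le R.hcmax.le) (g := R.nodeMap τ w) ?_ hwtop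
    intro x y
    have := R.nodeMap_upper τ w hwalive x y
    rwa [hwlen] at this
  have hAv : packPre h (R.attractor (fun u => τ (v ++ u))) = ⊤ := by
    rw [R.attractor_neck_eq hneck hvlen hwlen hvalive hwalive]
    exact hAw
  -- the cylinder piece near z
  have hKtop : packPre h (R.nodeMap τ v '' R.attractor (fun u => τ (v ++ u))) = ⊤ := by
    refine packPre_expand_top h hmono hlam0 hdbl (c' := R.cmin ^ m) (pow_pos R.hcmin m)
      (pow_le_one₀ R.hcmin.le hcmin1) (g := R.nodeMap τ v) ?_ hAv
    intro x y
    have := R.nodeMap_lower τ v x y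
    rwa [hvlen] at this
  have hKF : R.nodeMap τ v '' R.attractor (fun u => τ (v ++ u)) ⊆ R.attractor τ := by
    rintro _ ⟨y, hy, rfl⟩
    exact R.mem_attractor_of_piece hvalive hy
  have hKball : R.nodeMap τ v '' R.attractor (fun u => τ (v ++ u)) ⊆
      Metric.ball (z : EuclideanSpace ℝ (Fin d)) ε := by
    rintro _ ⟨y, hy, rfl⟩
    have hyΔ : y ∈ R.Δ := R.attractor_subset_Δ _ hy
    rw [Metric.mem_ball]
    have hcp : (0:ℝ) < R.cmax ^ m := pow_pos hcmax0 m
    calc dist (R.nodeMap τ v y) (z : EuclideanSpace ℝ (Fin d))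
        = dist (R.nodeMap τ v y) (R.nodeMap τ v a) := by rw [haeq]
      _ ≤ R.cmax ^ m * dist y a := by
          have := R.nodeMap_upper τ v hvalive y a
          rwa [hvlen] at this
      _ ≤ R.cmax ^ m * Metric.diam R.Δ := by
          have := Metric.dist_le_diam_of_mem R.hΔcompact.isBounded hyΔ haΔ
          nlinarith
      _ < ε := by nlinarith
  have h1 : packPre h (closure (R.attractor τ ∩ C n)) = ⊤ := by
    rw [eq_top_iff, ← hKtop]
    exact packPre_mono fun x hx => hkey ⟨hKF hx, hKball hx⟩
  have h2 : packPre h (R.attractor τ ∩ C n) = ⊤ := packPre_closure_top h hlam0 hdbl h1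
  refine ⟨n, ?_⟩
  rw [eq_top_iff, ← h2]
  exact packPre_mono Set.inter_subset_right
end
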